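/- If A, B, C, D are four pairwise distinct points in ℝ² with |AB| = |BC| = |CD| = |DA|, then ABCD is a parallelogram (vector AB equals vector DC): B − A = C − D. -/

import Mathlib

/-- Four pairwise distinct points in the plane with
`|AB| = |BC| = |CD| = |DA|` form a parallelogram: `B − A = C − D`. -/
theorem equilateral_quadrilateral_is_rhombus (A B C D : EuclideanSpace ℝ (Fin 2))
    (hAB : A ≠ B) (hAC : A ≠ C) (hAD : A ≠ D) (hBC : B ≠ C) (hBD : B ≠ D) (hCD : C ≠ D)
    (h1 : dist A B = dist B C) (h2 : dist B C = dist C D) (h3 : dist C D = dist D A) :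
    B - A = C - D := by
  have hd : ∀ X Y : EuclideanSpace ℝ (Fin 2),
      dist X Y ^ 2 = (X 0 - Y 0) ^ 2 + (X 1 - Y 1) ^ 2 := by
    intro X Y
    rw [EuclideanSpace.dist_eq, Real.sq_sqrt (by positivity)]
    simp [Fin.sum_univ_two, Real.dist_eq, sq_abs]
  have e1 : (A 0 - B 0) ^ 2 + (A 1 - B 1) ^ 2 = (B 0 - C 0) ^ 2 + (B 1 - C 1) ^ 2 := by
    rw [← hd, ← hd, h1]
  have e2 : (B 0 - C 0) ^ 2 + (B 1 - C 1) ^ 2 = (C 0 - D 0) ^ 2 + (C 1 - D 1) ^ 2 := by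
    rw [← hd, ← hd, h2]
  have e3 : (C 0 - D 0) ^ 2 + (C 1 - D 1) ^ 2 = (D 0 - A 0) ^ 2 + (D 1 - A 1) ^ 2 := by
    rw [← hd, ← hd, h3]
  set p0 := A 0 - C 0 with hp0
  set p1 := A 1 - C 1 with hp1
  set q0 := B 0 - D 0 with hq0
  set q1 := B 1 - D 1 with hq1
  have hpq : p0 * q0 + p1 * q1 = 0 := by linear_combination (-e1 - e3) / 2
  have hqm : q0 * (A 0 + C 0 - B 0 - D 0) + q1 * (A 1 + C 1 - B 1 - D 1) = 0 := by
    linear_combination (-e1 - 2 * e2 - e3) / 2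
  have hpm : p0 * (A 0 + C 0 - B 0 - D 0) + p1 * (A 1 + C 1 - B 1 - D 1) = 0 := by
    linear_combination (e1 - e3) / 2
  have hP : p0 ^ 2 + p1 ^ 2 > 0 := by
    rw [← hd]; exact pow_pos (dist_pos.2 hAC) 2
  have hQ : q0 ^ 2 + q1 ^ 2 > 0 := by
    rw [← hd]; exact pow_pos (dist_pos.2 hBD) 2
  have hdet : (p0 * q1 - p1 * q0) ^ 2 > 0 := by nlinarith [sq_nonneg (p0 * q0 + p1 * q1)]
  have hdet' : p0 * q1 - p1 * q0 ≠ 0 := by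
    intro h; rw [h] at hdet; simp at hdet
  have hm0 : A 0 + C 0 - B 0 - D 0 = 0 := by
    have : (A 0 + C 0 - B 0 - D 0) * (p0 * q1 - p1 * q0) = 0 := by
      linear_combination q1 * hpm - p1 * hqm
    exact (mul_eq_zero.1 this).resolve_right hdet'
  have hm1 : A 1 + C 1 - B 1 - D 1 = 0 := by
    have : (A 1 + C 1 - B 1 - D 1) * (p0 * q1 - p1 * q0) = 0 := by
      linear_combination p0 * hqm - q0 * hpm
    exact (mul_eq_zero.1 this).resolve_right hdet'
  ext i
  fin_cases i <;> simp [EuclideanSpace] <;> linarith
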